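/- arXiv:2012.02192 — 3 statements merged into one kernel-verified Lean document; each statement's English description precedes it below -/
import Mathlib

section
/- Incrementality of constraints is preserved under restriction: if n : L → N is an incremental monomorphism of graphs and n = b ∘ a is any factorization with a : L → X and b : X → N both monos, then a : L → X is incremental. -/
open CategoryTheory CategoryTheory.Limits

/-- A directed graph: sets of nodes and edges with source and target functions. -/
structure DGraph : Type 1 where
  N : Type
  E : Type
  s : E → N
  t : E → N

/-- A graph morphism: node and edge maps commuting with source and target. -/
@[ext]
structure GraphHom (G G' : DGraph) : Type where
  fN : G.N → G'.N
  fE : G.E → G'.E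
  comm_s : ∀ e, fN (G.s e) = G'.s (fE e)
  comm_t : ∀ e, fN (G.t e) = G'.t (fE e)

instance : Category DGraph where
  Hom := GraphHom
  id G := ⟨id, id, fun _ => rfl, fun _ => rfl⟩
  comp f g := ⟨g.fN ∘ f.fN, g.fE ∘ f.fE,
    fun e => by simp only [Function.comp_apply, f.comm_s, g.comm_s],
    fun e => by simp only [Function.comp_apply, f.comm_t, g.comm_t]⟩
  id_comp _ := rfl
  comp_id _ := rfl
  assoc _ _ _ := rfl

/-- A mono `n : L ⟶ N` is incremental if any two mono factorizations of it are comparable. -/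
def Incremental {L N : DGraph} (n : L ⟶ N) : Prop :=
  Mono n ∧ ∀ {X₁ X₂ : DGraph} (a₁ : L ⟶ X₁) (b₁ : X₁ ⟶ N) (a₂ : L ⟶ X₂) (b₂ : X₂ ⟶ N),
    Mono a₁ → Mono b₁ → Mono a₂ → Mono b₂ → a₁ ≫ b₁ = n → a₂ ≫ b₂ = n →
    (∃ x : X₁ ⟶ X₂, a₁ ≫ x = a₂ ∧ x ≫ b₂ = b₁) ∨
    (∃ x : X₂ ⟶ X₁, a₂ ≫ x = a₁ ∧ x ≫ b₁ = b₂)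

/-- Incrementality is preserved under restriction: if `n = a ≫ b` with `a, b` mono
and `n` incremental, then `a` is incremental. -/
theorem incremental_of_factor {L X N : DGraph} (n : L ⟶ N) (a : L ⟶ X) (b : X ⟶ N)
    (ha : Mono a) (hb : Mono b) (hfac : a ≫ b = n) (hinc : Incremental n) :
    Incremental a := by
  refine ⟨ha, fun {X₁ X₂} a₁ b₁ a₂ b₂ h₁ h₂ h₃ h₄ f₁ f₂ => ?_⟩
  haveI := h₂; haveI := h₄; haveI := hb
  have m₁ : Mono (b₁ ≫ b) := mono_comp _ _
  have m₂ : Mono (b₂ ≫ b) := mono_comp _ _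
  have e₁ : a₁ ≫ (b₁ ≫ b) = n := by rw [← Category.assoc, f₁, hfac]
  have e₂ : a₂ ≫ (b₂ ≫ b) = n := by rw [← Category.assoc, f₂, hfac]
  rcases hinc.2 a₁ (b₁ ≫ b) a₂ (b₂ ≫ b) h₁ m₁ h₃ m₂ e₁ e₂ with ⟨x, hx1, hx2⟩ | ⟨x, hx1, hx2⟩
  · exact Or.inl ⟨x, hx1, by
      have := hx2
      rw [← Category.assoc] at this
      exact (cancel_mono b).mp this⟩
  · exact Or.inr ⟨x, hx1, by
      have := hx2
      rw [← Category.assoc] at this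
      exact (cancel_mono b).mp this⟩
end

section
/- For the enriched type graph construction, the body of each constraint shape has two distinct monomorphisms into the enriched type graph whenever the shape morphism is not an isomorphism: if the enriched type graph TG' is built as the colimit of TG together with all shapes n⁻ : L⁻ → N⁻ (glued along the typings L⁻ → TG), then for each shape the colimit injection N⁻ → TG' and the composite N⁻ → TG → TG' agree on L⁻ but are distinct maps, provided n⁻ is not an iso. -/
open CategoryTheory CategoryTheory.Limits

/-- The diagram whose colimit is the enriched type graph: the type graph `TG` together
with all constraint shapes `n⁻ : L⁻ᵢ ⟶ N⁻ᵢ` glued along the typings `L⁻ᵢ ⟶ TG`. -/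
def shapesIndex (ι : Type) (TG : DGraph) (border body : ι → DGraph)
    (shape : ∀ i, border i ⟶ body i) (tL : ∀ i, border i ⟶ TG) :
    MultispanIndex (MultispanShape.mk ι (Option ι) (fun i => some i)
      (fun _ => none)) DGraph where
  left := border
  right := fun r => Option.rec TG body r
  fst := shape
  snd := tL

/-! ### Auxiliary lemmas -/

/-- The one-point graph. -/
def ptGraph : DGraph := ⟨Unit, Empty, Empty.elim, Empty.elim⟩

/-- The hom from the point graph picking a node. -/
def ptHom (G : DGraph) (x : G.N) : ptGraph ⟶ G :=
  ⟨fun _ => x, Empty.elim, fun e => e.elim, fun e => e.elim⟩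

lemma mono_fN_inj {G H : DGraph} (f : G ⟶ H) [Mono f] : Function.Injective f.fN := by
  intro x y h
  have hc : ptHom G x ≫ f = ptHom G y ≫ f := by
    apply GraphHom.ext
    · funext _; exact h
    · funext e; exact e.elim
  have := (cancel_mono f).mp hc
  exact congrFun (congrArg GraphHom.fN this) ()

/-- The walking edge graph. -/
def edgGraph : DGraph := ⟨Bool, Unit, fun _ => false, fun _ => true⟩

/-- The hom from the walking edge graph picking an edge. -/
def edgHom (G : DGraph) (e : G.E) : edgGraph ⟶ G :=
  ⟨fun b => bif b then G.t e else G.s e, fun _ => e, fun _ => rfl, fun _ => rfl⟩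

lemma mono_fE_inj {G H : DGraph} (f : G ⟶ H) [Mono f] : Function.Injective f.fE := by
  intro e1 e2 h
  have hs : f.fN (G.s e1) = f.fN (G.s e2) := by rw [f.comm_s, f.comm_s, h]
  have ht : f.fN (G.t e1) = f.fN (G.t e2) := by rw [f.comm_t, f.comm_t, h]
  have hc : edgHom G e1 ≫ f = edgHom G e2 ≫ f := by
    apply GraphHom.ext
    · funext b; cases b
      · exact hs
      · exact ht
    · funext _; exact h
  have := (cancel_mono f).mp hc
  exact congrFun (congrArg GraphHom.fE this) ()

lemma isIso_of_bij {G H : DGraph} (f : G ⟶ H) (hN : Function.Bijective f.fN)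
    (hE : Function.Bijective f.fE) : IsIso f := by
  let eN := Equiv.ofBijective f.fN hN
  let eE := Equiv.ofBijective f.fE hE
  have hcs : ∀ e, eN.symm (H.s e) = G.s (eE.symm e) := by
    intro e
    apply hN.injective
    show eN (eN.symm (H.s e)) = f.fN (G.s (eE.symm e))
    rw [eN.apply_symm_apply, f.comm_s]
    show H.s e = H.s (eE (eE.symm e))
    rw [eE.apply_symm_apply]
  have hct : ∀ e, eN.symm (H.t e) = G.t (eE.symm e) := by
    intro e
    apply hN.injective
    show eN (eN.symm (H.t e)) = f.fN (G.t (eE.symm e))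
    rw [eN.apply_symm_apply, f.comm_t]
    show H.t e = H.t (eE (eE.symm e))
    rw [eE.apply_symm_apply]
  refine ⟨⟨⟨eN.symm, eE.symm, hcs, hct⟩, ?_, ?_⟩⟩
  · apply GraphHom.ext
    · funext x; exact eN.symm_apply_apply x
    · funext e; exact eE.symm_apply_apply e
  · apply GraphHom.ext
    · funext x; exact eN.apply_symm_apply x
    · funext e; exact eE.apply_symm_apply e

section Glue
open Classical

variable (TG G : DGraph) {B : DGraph} (f : B ⟶ G) (t : G ⟶ TG)

/-- Where a node of the body goes in the glued graph. -/
noncomputable def glueN (x : G.N) : TG.N ⊕ G.N :=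
  if ∃ a, f.fN a = x then Sum.inl (t.fN x) else Sum.inr x

/-- Where an edge of the body goes in the glued graph. -/
noncomputable def glueE (e : G.E) : TG.E ⊕ G.E :=
  if ∃ a, f.fE a = e then Sum.inl (t.fE e) else Sum.inr e

/-- The glued graph: `TG` plus a fresh copy of the non-border part of `G`. -/
noncomputable def glueGraph : DGraph where
  N := TG.N ⊕ G.N
  E := TG.E ⊕ G.E
  s := Sum.elim (fun e => Sum.inl (TG.s e)) (fun e => glueN TG G f t (G.s e))
  t := Sum.elim (fun e => Sum.inl (TG.t e)) (fun e => glueN TG G f t (G.t e))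

/-- The inclusion of `TG` into the glued graph. -/
noncomputable def glueP1 : TG ⟶ glueGraph TG G f t :=
  ⟨Sum.inl, Sum.inl, fun _ => rfl, fun _ => rfl⟩

/-- The inclusion of the body into the glued graph. -/
noncomputable def glueP2 : G ⟶ glueGraph TG G f t where
  fN := glueN TG G f t
  fE := glueE TG G f t
  comm_s e := by
    show glueN TG G f t (G.s e) =
      Sum.elim (fun e => Sum.inl (TG.s e)) (fun e => glueN TG G f t (G.s e))
        (glueE TG G f t e)
    unfold glueE
    by_cases h : ∃ a, f.fE a = e
    · rw [if_pos h]
      obtain ⟨a, ha⟩ := h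
      have hx : ∃ b, f.fN b = G.s e := ⟨B.s a, by rw [f.comm_s, ha]⟩
      unfold glueN
      rw [if_pos hx]
      show Sum.inl (t.fN (G.s e)) = Sum.inl (TG.s (t.fE e))
      rw [t.comm_s]
    · rw [if_neg h]
      rfl
  comm_t e := by
    show glueN TG G f t (G.t e) =
      Sum.elim (fun e => Sum.inl (TG.t e)) (fun e => glueN TG G f t (G.t e))
        (glueE TG G f t e)
    unfold glueE
    by_cases h : ∃ a, f.fE a = e
    · rw [if_pos h]
      obtain ⟨a, ha⟩ := h
      have hx : ∃ b, f.fN b = G.t e := ⟨B.t a, by rw [f.comm_t, ha]⟩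
      unfold glueN
      rw [if_pos hx]
      show Sum.inl (t.fN (G.t e)) = Sum.inl (TG.t (t.fE e))
      rw [t.comm_t]
    · rw [if_neg h]
      rfl

lemma glue_comm (l : B ⟶ TG) (hl : f ≫ t = l) :
    f ≫ glueP2 TG G f t = l ≫ glueP1 TG G f t := by
  apply GraphHom.ext
  · funext a
    show glueN TG G f t (f.fN a) = Sum.inl (l.fN a)
    unfold glueN
    rw [if_pos ⟨a, rfl⟩, ← hl]
    rfl
  · funext a
    show glueE TG G f t (f.fE a) = Sum.inl (l.fE a)
    unfold glueE
    rw [if_pos ⟨a, rfl⟩, ← hl]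
    rfl

lemma glue_surj (h : glueP2 TG G f t = t ≫ glueP1 TG G f t) :
    Function.Surjective f.fN ∧ Function.Surjective f.fE := by
  constructor
  · intro x
    have hx : glueN TG G f t x = Sum.inl (t.fN x) :=
      congrFun (congrArg GraphHom.fN h) x
    by_contra hc
    have : ¬ ∃ a, f.fN a = x := fun ⟨a, ha⟩ => hc ⟨a, ha⟩
    rw [glueN, if_neg this] at hx
    simp at hx
  · intro e
    have he : glueE TG G f t e = Sum.inl (t.fE e) :=
      congrFun (congrArg GraphHom.fE h) e
    by_contra hc
    have : ¬ ∃ a, f.fE a = e := fun ⟨a, ha⟩ => hc ⟨a, ha⟩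
    rw [glueE, if_neg this] at he
    simp at he

end Glue

open Classical in
/-- In the enriched type graph (the colimit of `TG` with all shapes glued along the
typings of their borders), for each shape whose shape morphism is not an iso, the colimit
injection of the body and the composite through `TG` agree on the border but are distinct. -/
theorem enriched_type_graph_two_monos (ι : Type) (TG : DGraph)
    (border body : ι → DGraph) (shape : ∀ i, border i ⟶ body i)
    (tL : ∀ i, border i ⟶ TG) (tN : ∀ i, body i ⟶ TG)
    (hshape : ∀ i, Mono (shape i)) (htL : ∀ i, Mono (tL i)) (htN : ∀ i, Mono (tN i))
    (hcomm : ∀ i, shape i ≫ tN i = tL i)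
    (K : Multicofork (shapesIndex ι TG border body shape tL)) (hK : IsColimit K)
    (i : ι) (hni : ¬ IsIso (shape i)) :
    shape i ≫ K.π (some i) = shape i ≫ (tN i ≫ K.π (none : Option ι)) ∧
    K.π (some i) ≠ tN i ≫ K.π (none : Option ι) := by
  constructor
  · have h := K.condition i
    -- h : shape i ≫ K.π (some i) = tL i ≫ K.π none
    exact h.trans ((congrArg (fun x : border i ⟶ TG => x ≫ K.π (none : Option ι)) (hcomm i)).symm.trans
      (Category.assoc _ _ _))
  · intro heq
    apply hni
    -- build the comparison multicofork on the glued graph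
    let W := glueGraph TG (body i) (shape i) (tN i)
    let p1 := glueP1 TG (body i) (shape i) (tN i)
    let p2 := glueP2 TG (body i) (shape i) (tN i)
    let π : ∀ r : Option ι, (shapesIndex ι TG border body shape tL).right r ⟶ W :=
      fun r => Option.rec p1
        (fun j => if h : j = i then eqToHom (congrArg body h) ≫ p2 else tN j ≫ p1) r
    have hw : ∀ a : ι, (shapesIndex ι TG border body shape tL).fst a ≫
        π (some a) =
        (shapesIndex ι TG border body shape tL).snd a ≫
        π none := by
      intro a
      show shape a ≫ π (some a) = tL a ≫ p1
      by_cases h : a = i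
      · subst h
        show shape a ≫ (if h : a = a then eqToHom (congrArg body h) ≫ p2
            else tN a ≫ p1) = tL a ≫ p1
        rw [dif_pos rfl, eqToHom_refl, Category.id_comp]
        exact glue_comm TG (body a) (shape a) (tN a) (tL a) (hcomm a)
      · show shape a ≫ (if h : a = i then eqToHom (congrArg body h) ≫ p2
            else tN a ≫ p1) = tL a ≫ p1
        rw [dif_neg h, ← Category.assoc, hcomm a]
    let c : Multicofork (shapesIndex ι TG border body shape tL) :=
      Multicofork.ofπ _ W π hw
    let m : K.pt ⟶ W := hK.desc c
    have hfac : ∀ r : Option ι, K.π r ≫ m = π r := by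
      intro r
      exact hK.fac c (WalkingMultispan.right r)
    have h1 : π (some i) = p2 := by
      show (if h : i = i then eqToHom (congrArg body h) ≫ p2 else tN i ≫ p1) = p2
      rw [dif_pos rfl, eqToHom_refl, Category.id_comp]
    have h2 : p2 = tN i ≫ p1 := by
      rw [← h1, ← hfac (some i), heq]
      exact (Category.assoc _ _ _).trans (congrArg (tN i ≫ ·) (hfac none))
    obtain ⟨hsN, hsE⟩ :=
      glue_surj TG (body i) (shape i) (tN i) h2
    haveI := hshape i
    exact isIso_of_bij (shape i) ⟨mono_fN_inj (shape i), hsN⟩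
      ⟨mono_fE_inj (shape i), hsE⟩
end

section
/- There is no monomorphism from a graph violating the complementation invariant to a graph satisfying it: if a typed graph X over the enriched type graph contains, for some constraint shape, both an occurrence of the body N⁻ and a parallel occurrence of the body complement over the same border occurrence, and G satisfies the complementation invariant Φ_inv, then there is no mono X → G. -/
open CategoryTheory CategoryTheory.Limits

/-- A typed graph `G` over the enriched type graph `TG'` satisfies the complementation
invariant if every occurrence of a border extends to an occurrence of the body xor to an
occurrence of the body complement. -/
def SatInv (ι : Type) (TG' : DGraph) (Lb Nb Ncb : ι → Over TG')
    (nb : ∀ i, Lb i ⟶ Nb i) (ncb : ∀ i, Lb i ⟶ Ncb i) (G : Over TG') : Prop :=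
  ∀ (i : ι) (o : Lb i ⟶ G), Mono o →
    Xor' (∃ q : Nb i ⟶ G, Mono q ∧ nb i ≫ q = o)
         (∃ q : Ncb i ⟶ G, Mono q ∧ ncb i ≫ q = o)

/-- There is no monomorphism from a graph violating the complementation invariant
(containing, over a common border occurrence, both the body and the body complement of
some shape) to a graph satisfying it. -/
theorem no_mono_of_invariant_violation (ι : Type) (TG' : DGraph)
    (Lb Nb Ncb : ι → Over TG')
    (nb : ∀ i, Lb i ⟶ Nb i) (ncb : ∀ i, Lb i ⟶ Ncb i)
    (X G : Over TG') (i : ι) (o : Lb i ⟶ X) (ho : Mono o)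
    (qb : Nb i ⟶ X) (hqb : Mono qb) (hb : nb i ≫ qb = o)
    (qc : Ncb i ⟶ X) (hqc : Mono qc) (hc : ncb i ≫ qc = o)
    (hG : SatInv ι TG' Lb Nb Ncb nb ncb G) :
    ¬ ∃ f : X ⟶ G, Mono f := by
  rintro ⟨f, hf⟩
  have h := hG i (o ≫ f) (mono_comp _ _)
  have h1 : ∃ q : Nb i ⟶ G, Mono q ∧ nb i ≫ q = o ≫ f :=
    ⟨qb ≫ f, mono_comp _ _, by rw [← Category.assoc, hb]⟩
  have h2 : ∃ q : Ncb i ⟶ G, Mono q ∧ ncb i ≫ q = o ≫ f :=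
    ⟨qc ≫ f, mono_comp _ _, by rw [← Category.assoc, hc]⟩
  rcases h with ⟨_, h⟩ | ⟨_, h⟩
  · exact h h2
  · exact h h1
end
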